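/- Let u ∈ ℤ^r and v ∈ ℤ^s have all entries positive, and let L : E_u → E_v be a map. Then L is additive (L(x ⊕ y) = L(x) ⊕ L(y) whenever x + y ≤ u) if and only if there exists a unique s × r matrix M with nonnegative integer entries satisfying Mu ≤ v (componentwise) such that L(x) = Mx for all x ∈ E_u. -/

import Mathlib

/-- The simplicial interval effect algebra `E_u = [0, u] ⊆ ℤ^r`, with
`x ⊕ y = x + y` defined whenever `x + y ≤ u` componentwise. -/
def Eu {r : ℕ} (u : Fin r → ℤ) : Type := {x : Fin r → ℤ // 0 ≤ x ∧ x ≤ u}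

/-- A map `L : E_u → E_v` is additive: `L (x ⊕ y) = L x ⊕ L y` whenever `x + y ≤ u`,
i.e. whenever `x + y` is again an element `z` of `E_u`. -/
def AdditiveMap {r s : ℕ} (u : Fin r → ℤ) (v : Fin s → ℤ)
    (L : Eu u → Eu v) : Prop :=
  ∀ x y z : Eu u, x.val + y.val = z.val → (L z).val = (L x).val + (L y).val

/-- (S1) for a binary operation on `E_u`: every left translation is additive. -/
def EuS1 {r : ℕ} (u : Fin r → ℤ) (op : Eu u → Eu u → Eu u) : Prop :=
  ∀ a : Eu u, AdditiveMap u u (op a)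

/-- (S3) for a binary operation on `E_u`: `a ∘ b = 0` implies `b ∘ a = 0`. -/
def EuS3 {r : ℕ} (u : Fin r → ℤ) (op : Eu u → Eu u → Eu u) : Prop :=
  ∀ a b : Eu u, (op a b).val = 0 → (op b a).val = 0

/-- a map `L : E_u → E_v` is additive iff there is a unique matrix `M`
with nonnegative integer entries and `M u ≤ v` componentwise such that `L x = M x`. -/
theorem additive_iff_matrix {r s : ℕ} (u : Fin r → ℤ) (v : Fin s → ℤ)
    (hu : ∀ i, 1 ≤ u i) (hv : ∀ j, 1 ≤ v j) (L : Eu u → Eu v) :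
    AdditiveMap u v L ↔
      ∃! M : Matrix (Fin s) (Fin r) ℤ,
        (∀ i j, 0 ≤ M i j) ∧ M.mulVec u ≤ v ∧ ∀ x : Eu u, (L x).val = M.mulVec x.val := by
  constructor
  · intro hL
    -- basis vectors of E_u
    have he : ∀ j : Fin r, (0 : Fin r → ℤ) ≤ Pi.single j 1 ∧ Pi.single j 1 ≤ u := by
      intro j
      constructor
      · intro k
        rcases eq_or_ne k j with h | h
        · subst h; simp
        · simp [Pi.single_apply, h]
      · intro k
        rcases eq_or_ne k j with h | h
        · subst h; simpa using hu k
        · simp only [Pi.single_apply, if_neg h]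
          exact le_trans zero_le_one (hu k)
    set e : Fin r → Eu u := fun j => ⟨Pi.single j 1, he j⟩ with he_def
    set M : Matrix (Fin s) (Fin r) ℤ := fun i j => (L (e j)).val i with hM_def
    have hMsingle : ∀ j, M.mulVec (Pi.single j 1) = (L (e j)).val := by
      intro j
      funext i
      simp [Matrix.mulVec, dotProduct, Pi.single_apply, hM_def]
    -- the key claim : L x = M x for all x
    have key : ∀ n : ℕ, ∀ x : Eu u, (∑ j, x.val j) = (n : ℤ) → (L x).val = M.mulVec x.val := by
      intro n
      induction n with
      | zero =>
        intro x hx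
        have hx0 : x.val = 0 := by
          funext k
          exact (Finset.sum_eq_zero_iff_of_nonneg (fun j _ => x.2.1 j)).1
            (by simpa using hx) k (Finset.mem_univ k)
        have hz : x.val + x.val = x.val := by rw [hx0]; simp
        have h0 : (L x).val = 0 := add_eq_left.mp (hL x x x hz).symm
        rw [h0, hx0, Matrix.mulVec_zero]
      | succ n ih =>
        intro x hx
        -- find a coordinate with x j ≥ 1
        have hex : ∃ j, 1 ≤ x.val j := by
          by_contra h
          push_neg at h
          have hx0 : ∀ j, x.val j = 0 := fun j =>
            le_antisymm (by linarith [h j]) (x.2.1 j)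
          have : (∑ j, x.val j) = 0 := by simp [hx0]
          rw [hx] at this
          exact_mod_cast Nat.succ_ne_zero n (by exact_mod_cast this)
        obtain ⟨j, hj⟩ := hex
        set yv : Fin r → ℤ := x.val - Pi.single j 1 with hyv
        have hy0 : (0 : Fin r → ℤ) ≤ yv := by
          intro k
          rcases eq_or_ne k j with h | h
          · subst h; simp [hyv]; linarith
          · simp [hyv, Pi.single_apply, h]; exact x.2.1 k
        have hyu : yv ≤ u := by
          intro k
          have : yv k ≤ x.val k := by
            simp only [hyv, Pi.sub_apply]
            have h1 := (he j).1 k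
            simp only [Pi.zero_apply] at h1
            linarith
          exact le_trans this (x.2.2 k)
        set y : Eu u := ⟨yv, hy0, hyu⟩ with hy_def
        have hsum : y.val + (e j).val = x.val := by
          funext k
          simp [hy_def, hyv, he_def]
        have hys : (∑ k, y.val k) = (n : ℤ) := by
          have : (∑ k, y.val k) = (∑ k, x.val k) - 1 := by
            simp [hy_def, hyv, Finset.sum_sub_distrib]
          rw [this, hx]
          push_cast
          ring
        have hadd := hL y (e j) x hsum
        rw [hadd, ih y hys, ← hMsingle j, ← Matrix.mulVec_add, hsum]
    refine ⟨M, ⟨fun i j => (L (e j)).2.1 i, ?_, ?_⟩, ?_⟩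
    · -- M u ≤ v
      have huE : (0 : Fin r → ℤ) ≤ u ∧ u ≤ u :=
        ⟨fun k => le_trans zero_le_one (hu k), le_refl u⟩
      have := key (∑ k, (u k).toNat) ⟨u, huE⟩ (by
        push_cast
        exact Finset.sum_congr rfl fun k _ =>
          (Int.toNat_of_nonneg (le_trans zero_le_one (hu k))).symm)
      rw [← this]
      exact (L ⟨u, huE⟩).2.2
    · intro x
      exact key (∑ k, (x.val k).toNat) x (by
        push_cast
        exact Finset.sum_congr rfl fun k _ =>
          (Int.toNat_of_nonneg (x.2.1 k)).symm)
    · -- uniqueness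
      intro M' ⟨_, _, hM'⟩
      ext i j
      have h1 := congrFun (hM' (e j)) i
      have h2 : M'.mulVec (Pi.single j 1) i = M' i j := by
        simp [Matrix.mulVec_single]
      simp only [he_def] at h1
      rw [← h2]
      exact h1.symm
  · rintro ⟨M, ⟨hM0, hMu, hML⟩, _⟩
    intro x y z hxyz
    rw [hML x, hML y, hML z, ← hxyz, Matrix.mulVec_add]
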